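/- Let N, n ≥ 1, let L be the Laplacian of a connected graph on N vertices, let σ > 0 and c₁, c₂ > 0 be constants, let M ∈ {0,1}^{N×n} be a binary mask matrix each of whose columns has at least one nonzero entry, let Y ∈ ℝ^{N×n}, and set Y_M = M ⊙ Y. Then the function f(X) = c₁·‖Y_M − M⊙X‖_F² + c₂·tr(Xᵀ L X) on ℝ^{N×n} is strictly convex and admits a unique minimizer X*, whose j-th column is given in closed form by X*_{:,j} = (c₁·Diag(M_{:,j}) + c₂·L)⁻¹ (c₁ · (Y_M)_{:,j}), where Diag(M_{:,j}) denotes the diagonal matrix whose diagonal is the j-th column of M (in particular each matrix c₁·Diag(M_{:,j}) + c₂·L is invertible). -/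

import Mathlib

open Matrix

private lemma swapdot {N : ℕ} {B : Matrix (Fin N) (Fin N) ℝ} (hB : Bᵀ = B)
    (u v : Fin N → ℝ) : u ⬝ᵥ B *ᵥ v = v ⬝ᵥ B *ᵥ u := by
  rw [dotProduct_mulVec, ← mulVec_transpose, hB, dotProduct_comm]

private lemma gquad {N : ℕ} (D L : Matrix (Fin N) (Fin N) ℝ) (hD : Dᵀ = D) (hL : Lᵀ = L)
    (c₁ c₂ : ℝ) (y u v : Fin N → ℝ) :
    c₁ * ((y - u) ⬝ᵥ D *ᵥ (y - u)) + c₂ * (u ⬝ᵥ L *ᵥ u)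
      = (c₁ * ((y - v) ⬝ᵥ D *ᵥ (y - v)) + c₂ * (v ⬝ᵥ L *ᵥ v))
        + 2 * ((u - v) ⬝ᵥ ((c₁ • D + c₂ • L) *ᵥ v - c₁ • (D *ᵥ y)))
        + ((u - v) ⬝ᵥ (c₁ • D + c₂ • L) *ᵥ (u - v)) := by
  simp only [Matrix.add_mulVec, Matrix.smul_mulVec, Matrix.mulVec_sub, Matrix.mulVec_add,
    sub_dotProduct, dotProduct_sub, dotProduct_add, add_dotProduct, dotProduct_smul,
    smul_dotProduct, smul_eq_mul]
  linear_combination c₁ * swapdot hD u y + c₁ * swapdot hD v y + c₁ * swapdot hD u v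
    + c₂ * swapdot hL u v + 2 * c₁ * swapdot hD y v + 2 * c₁ * swapdot hD v u
    + 2 * c₂ * swapdot hL v u

private lemma gconv {N : ℕ} (D L : Matrix (Fin N) (Fin N) ℝ)
    (c₁ c₂ : ℝ) (y u v : Fin N → ℝ) (t s : ℝ) (hts : t + s = 1) :
    c₁ * ((y - (t • u + s • v)) ⬝ᵥ D *ᵥ (y - (t • u + s • v)))
        + c₂ * ((t • u + s • v) ⬝ᵥ L *ᵥ (t • u + s • v))
      = t * (c₁ * ((y - u) ⬝ᵥ D *ᵥ (y - u)) + c₂ * (u ⬝ᵥ L *ᵥ u))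
        + s * (c₁ * ((y - v) ⬝ᵥ D *ᵥ (y - v)) + c₂ * (v ⬝ᵥ L *ᵥ v))
        - t * s * ((u - v) ⬝ᵥ (c₁ • D + c₂ • L) *ᵥ (u - v)) := by
  have hs : s = 1 - t := by linarith
  subst hs
  simp only [Matrix.add_mulVec, Matrix.smul_mulVec, Matrix.mulVec_sub, Matrix.mulVec_add,
    Matrix.mulVec_smul, sub_dotProduct, dotProduct_sub, dotProduct_add, add_dotProduct,
    dotProduct_smul, smul_dotProduct, smul_eq_mul]
  ring

theorem stmt0 {N n : ℕ} (hN : 1 ≤ N) (hn : 1 ≤ n)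
    (L : Matrix (Fin N) (Fin N) ℝ)
    (hLsym : L.IsSymm) (hLpsd : L.PosSemidef)
    (hL1 : L *ᵥ (fun _ => (1 : ℝ)) = 0)
    (hLker : ∀ x : Fin N → ℝ, L *ᵥ x = 0 → ∃ c : ℝ, x = fun _ => c)
    (σ c₁ c₂ : ℝ) (hσ : 0 < σ) (hc₁ : 0 < c₁) (hc₂ : 0 < c₂)
    (M Y : Matrix (Fin N) (Fin n) ℝ)
    (hM : ∀ i j, M i j = 0 ∨ M i j = 1)
    (hMcol : ∀ j, ∃ i, M i j ≠ 0) :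
    -- the objective function, with Y_M = M ⊙ Y
    let f : Matrix (Fin N) (Fin n) ℝ → ℝ := fun X =>
      c₁ * (∑ i, ∑ j, (M i j * Y i j - M i j * X i j) ^ 2)
        + c₂ * (Xᵀ * L * X).trace
    -- the closed-form candidate minimizer, columnwise
    let Xstar : Matrix (Fin N) (Fin n) ℝ := Matrix.of fun i j =>
      ((c₁ • Matrix.diagonal (fun i' => M i' j) + c₂ • L)⁻¹ *ᵥ
        (fun i' => c₁ * (M i' j * Y i' j))) i
    StrictConvexOn ℝ Set.univ f ∧
    (∀ j : Fin n, IsUnit (c₁ • Matrix.diagonal (fun i => M i j) + c₂ • L)) ∧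
    (∀ X : Matrix (Fin N) (Fin n) ℝ, X ≠ Xstar → f Xstar < f X) := by
  intro f Xstar
  set D : Fin n → Matrix (Fin N) (Fin N) ℝ := fun j => Matrix.diagonal (fun i => M i j) with hDdef
  set A : Fin n → Matrix (Fin N) (Fin N) ℝ := fun j => c₁ • D j + c₂ • L with hAdef
  have hDsym : ∀ j, (D j)ᵀ = D j := fun j => Matrix.diagonal_transpose _
  have hLs : Lᵀ = L := hLsym
  -- quadratic form split
  have hsplit : ∀ (j : Fin n) (x : Fin N → ℝ),
      x ⬝ᵥ (A j) *ᵥ x = c₁ * (∑ i, M i j * x i ^ 2) + c₂ * (x ⬝ᵥ L *ᵥ x) := by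
    intro j x
    simp only [hAdef, Matrix.add_mulVec, Matrix.smul_mulVec, dotProduct_add,
      dotProduct_smul, smul_eq_mul]
    congr 1
    congr 1
    simp only [dotProduct, hDdef, mulVec_diagonal]
    exact Finset.sum_congr rfl fun i _ => by ring
  -- positive definiteness
  have hPD : ∀ j, (A j).PosDef := by
    intro j
    apply Matrix.PosDef.of_dotProduct_mulVec_pos
    · show (A j)ᴴ = A j
      have hAsym' : (A j)ᵀ = A j := by
        simp [hAdef, Matrix.transpose_add, Matrix.transpose_smul, hDsym j, hLs]
      calc (A j)ᴴ = (A j)ᵀ := by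
            ext i k; simp [Matrix.conjTranspose_apply, Matrix.transpose_apply]
        _ = A j := hAsym'
    · intro x hx
      have hstar : (star x : Fin N → ℝ) = x := by
        funext i; simp
      rw [hstar, hsplit j x]
      have h1 : 0 ≤ ∑ i, M i j * x i ^ 2 := by
        apply Finset.sum_nonneg
        intro i _
        rcases hM i j with h | h <;> rw [h] <;> positivity
      have h2 : 0 ≤ x ⬝ᵥ L *ᵥ x := by
        have := hLpsd.dotProduct_mulVec_nonneg x
        rwa [hstar] at this
      rcases lt_or_eq_of_le h2 with h2' | h2'
      · nlinarith
      rcases lt_or_eq_of_le h1 with h1' | h1'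
      · nlinarith
      -- both zero: contradiction
      exfalso
      have hLx : L *ᵥ x = 0 := by
        have := (hLpsd.dotProduct_mulVec_zero_iff x)
        rw [hstar] at this
        exact this.mp h2'.symm
      obtain ⟨c, rfl⟩ := hLker x hLx
      obtain ⟨i₀, hi₀⟩ := hMcol j
      have hM1 : M i₀ j = 1 := (hM i₀ j).resolve_left hi₀
      have hterm : M i₀ j * c ^ 2 = 0 := by
        have := (Finset.sum_eq_zero_iff_of_nonneg (fun i _ => by
          rcases hM i j with h | h <;> rw [h] <;> positivity)).mp h1'.symm
        exact this i₀ (Finset.mem_univ _)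
      rw [hM1, one_mul, pow_eq_zero_iff (by norm_num)] at hterm
      exact hx (by funext i; simp [hterm])
  have hUnit : ∀ j, IsUnit (A j) := fun j => (hPD j).isUnit
  have hAsym : ∀ j, (A j)ᵀ = A j := by
    intro j
    simp [hAdef, Matrix.transpose_add, Matrix.transpose_smul, hDsym j, hLs]
  -- f columnwise
  have hf : ∀ X : Matrix (Fin N) (Fin n) ℝ,
      f X = ∑ j, (c₁ * (((fun i => Y i j) - fun i => X i j) ⬝ᵥ D j *ᵥ
          ((fun i => Y i j) - fun i => X i j))
        + c₂ * ((fun i => X i j) ⬝ᵥ L *ᵥ fun i => X i j)) := by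
    intro X
    show c₁ * (∑ i, ∑ j, (M i j * Y i j - M i j * X i j) ^ 2) + c₂ * (Xᵀ * L * X).trace = _
    rw [Finset.sum_comm (s := Finset.univ) (t := Finset.univ)]
    have h1 : ∀ j, ∑ i, (M i j * Y i j - M i j * X i j) ^ 2
        = ((fun i => Y i j) - fun i => X i j) ⬝ᵥ D j *ᵥ ((fun i => Y i j) - fun i => X i j) := by
      intro j
      simp only [dotProduct, hDdef, mulVec_diagonal, Pi.sub_apply]
      exact Finset.sum_congr rfl fun i _ => by rcases hM i j with h | h <;> rw [h] <;> ring
    have h2 : (Xᵀ * L * X).trace = ∑ j, (fun i => X i j) ⬝ᵥ L *ᵥ fun i => X i j := by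
      simp only [Matrix.trace, Matrix.diag_apply, Matrix.mul_apply, Matrix.transpose_apply,
        dotProduct, mulVec, Finset.sum_mul]
      refine Finset.sum_congr rfl fun j _ => ?_
      rw [Finset.sum_comm]
      refine Finset.sum_congr rfl fun i _ => ?_
      rw [Finset.mul_sum]
      exact Finset.sum_congr rfl fun k _ => by ring
    rw [h2]
    rw [Finset.sum_add_distrib, ← Finset.mul_sum, ← Finset.mul_sum]
    congr 1
    congr 1
    exact Finset.sum_congr rfl fun j _ => h1 j
  -- Xstar column property
  have hXcolA : ∀ j, (A j) *ᵥ (fun i => Xstar i j) = fun i => c₁ * (M i j * Y i j) := by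
    intro j
    have hcol : (fun i => Xstar i j) = (A j)⁻¹ *ᵥ (fun i' => c₁ * (M i' j * Y i' j)) := rfl
    rw [hcol, Matrix.mulVec_mulVec,
      Matrix.mul_nonsing_inv _ ((Matrix.isUnit_iff_isUnit_det _).mp (hUnit j)),
      Matrix.one_mulVec]
  -- the key per-column comparison at Xstar
  have hkey : ∀ (X : Matrix (Fin N) (Fin n) ℝ) (j : Fin n),
      c₁ * (((fun i => Y i j) - fun i => X i j) ⬝ᵥ D j *ᵥ ((fun i => Y i j) - fun i => X i j))
        + c₂ * ((fun i => X i j) ⬝ᵥ L *ᵥ fun i => X i j)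
      = (c₁ * (((fun i => Y i j) - fun i => Xstar i j) ⬝ᵥ D j *ᵥ
            ((fun i => Y i j) - fun i => Xstar i j))
          + c₂ * ((fun i => Xstar i j) ⬝ᵥ L *ᵥ fun i => Xstar i j))
        + (((fun i => X i j) - fun i => Xstar i j) ⬝ᵥ (A j) *ᵥ
            ((fun i => X i j) - fun i => Xstar i j)) := by
    intro X j
    have hcr : (A j) *ᵥ (fun i => Xstar i j) - c₁ • (D j *ᵥ fun i => Y i j) = 0 := by
      rw [hXcolA j]
      funext i
      simp [hDdef, mulVec_diagonal]
    have := gquad (D j) L (hDsym j) hLs c₁ c₂ (fun i => Y i j)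
      (fun i => X i j) (fun i => Xstar i j)
    have hAj : c₁ • D j + c₂ • L = A j := rfl
    rw [hAj] at this
    rw [this, hcr, dotProduct_zero]
    ring
  refine ⟨?_, fun j => hUnit j, ?_⟩
  · -- strict convexity
    refine ⟨convex_univ, ?_⟩
    intro P _ Q _ hPQ a b ha hb hab
    simp only [smul_eq_mul]
    rw [hf, hf, hf]
    have hcols : ∀ j : Fin n, (fun i => (a • P + b • Q) i j)
        = a • (fun i => P i j) + b • (fun i => Q i j) := by
      intro j; funext i; simp [Matrix.add_apply, Matrix.smul_apply]
    have hconv : ∀ j : Fin n,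
        (c₁ * (((fun i => Y i j) - fun i => (a • P + b • Q) i j) ⬝ᵥ D j *ᵥ
            ((fun i => Y i j) - fun i => (a • P + b • Q) i j))
          + c₂ * ((fun i => (a • P + b • Q) i j) ⬝ᵥ L *ᵥ fun i => (a • P + b • Q) i j))
        = a * (c₁ * (((fun i => Y i j) - fun i => P i j) ⬝ᵥ D j *ᵥ
              ((fun i => Y i j) - fun i => P i j))
            + c₂ * ((fun i => P i j) ⬝ᵥ L *ᵥ fun i => P i j))
          + b * (c₁ * (((fun i => Y i j) - fun i => Q i j) ⬝ᵥ D j *ᵥ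
              ((fun i => Y i j) - fun i => Q i j))
            + c₂ * ((fun i => Q i j) ⬝ᵥ L *ᵥ fun i => Q i j))
          - a * b * (((fun i => P i j) - fun i => Q i j) ⬝ᵥ (A j) *ᵥ
              ((fun i => P i j) - fun i => Q i j)) := by
      intro j
      rw [hcols j]
      exact gconv (D j) L c₁ c₂ (fun i => Y i j) (fun i => P i j) (fun i => Q i j) a b hab
    have hpos : 0 < ∑ j, (((fun i => P i j) - fun i => Q i j) ⬝ᵥ (A j) *ᵥ
        ((fun i => P i j) - fun i => Q i j)) := by
      obtain ⟨j₀, hj₀⟩ : ∃ j, (fun i => P i j) ≠ (fun i => Q i j) := by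
        by_contra h
        push_neg at h
        exact hPQ (by ext i j; exact congrFun (h j) i)
      refine Finset.sum_pos' (fun j _ => ?_) ⟨j₀, Finset.mem_univ _, ?_⟩
      · have h := (hPD j).posSemidef.dotProduct_mulVec_nonneg ((fun i => P i j) - fun i => Q i j)
        rwa [star_trivial] at h
      · have h := (hPD j₀).dotProduct_mulVec_pos (x := (fun i => P i j₀) - fun i => Q i j₀) (sub_ne_zero.mpr hj₀)
        rwa [star_trivial] at h
    simp only [hconv]
    rw [Finset.sum_sub_distrib, Finset.sum_add_distrib, ← Finset.mul_sum, ← Finset.mul_sum,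
      ← Finset.mul_sum]
    have habpos : 0 < a * b * ∑ j, (((fun i => P i j) - fun i => Q i j) ⬝ᵥ (A j) *ᵥ
        ((fun i => P i j) - fun i => Q i j)) := mul_pos (mul_pos ha hb) hpos
    linarith
  · -- minimality
    intro X hXne
    rw [hf X, hf Xstar]
    have hle : ∀ j ∈ Finset.univ, (c₁ * (((fun i => Y i j) - fun i => Xstar i j) ⬝ᵥ D j *ᵥ
          ((fun i => Y i j) - fun i => Xstar i j))
        + c₂ * ((fun i => Xstar i j) ⬝ᵥ L *ᵥ fun i => Xstar i j))
        ≤ (c₁ * (((fun i => Y i j) - fun i => X i j) ⬝ᵥ D j *ᵥ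
          ((fun i => Y i j) - fun i => X i j))
        + c₂ * ((fun i => X i j) ⬝ᵥ L *ᵥ fun i => X i j)) := by
      intro j _
      rw [hkey X j]
      have h := (hPD j).posSemidef.dotProduct_mulVec_nonneg ((fun i => X i j) - fun i => Xstar i j)
      rw [star_trivial] at h
      linarith
    obtain ⟨j₀, hj₀⟩ : ∃ j, (fun i => X i j) ≠ (fun i => Xstar i j) := by
      by_contra h
      push_neg at h
      exact hXne (by ext i j; exact congrFun (h j) i)
    apply Finset.sum_lt_sum hle
    refine ⟨j₀, Finset.mem_univ _, ?_⟩
    rw [hkey X j₀]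
    have h := (hPD j₀).dotProduct_mulVec_pos (x := (fun i => X i j₀) - fun i => Xstar i j₀) (sub_ne_zero.mpr hj₀)
    rw [star_trivial] at h
    linarith
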